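/- arXiv:2312.16152 — 4 statements merged into one kernel-verified Lean document; each statement's English description precedes it below -/
import Mathlib

section
/- For i ∈ V_{n-1}, 1 ≤ r ≤ n−3, and ε ∈ {0,1}^r, one has p_ε(i) ≡ 1 (mod 2^n) if and only if i ≡ 1 (mod 2^{n-r}) and ε is the all-ones vector. -/
/-- The representative of `x` modulo `2^n` taken in `{1, …, 2^n}`. -/
def vmod (n : ℕ) (x : ℤ) : ℤ := (x - 1) % (2 ^ n) + 1

/-- The maps `p₀(i) = 2i mod 2^n` and `p₁(i) = 2i - 1 mod 2^n`; `j = true` codes `p₁`. -/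
def pmap (n : ℕ) (j : Bool) (i : ℤ) : ℤ :=
  if j then vmod n (2 * i - 1) else vmod n (2 * i)

/-- Composition `p_{ε₀} ∘ ⋯ ∘ p_{ε_{r-1}}` along a list `ε` of bits. -/
def pcomp (n : ℕ) : List Bool → ℤ → ℤ
  | [], i => i
  | e :: es, i => pmap n e (pcomp n es i)

def bitsum : List Bool → ℤ
  | [] => 0
  | e :: es => (if e then 1 else 0) + 2 * bitsum es

lemma vmod_modeq (n : ℕ) (x : ℤ) : vmod n x ≡ x [ZMOD (2 ^ n)] := by
  unfold vmod
  have h : (x - 1) % 2 ^ n ≡ x - 1 [ZMOD (2 ^ n)] := Int.emod_emod_of_dvd _ dvd_rfl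
  calc (x - 1) % 2 ^ n + 1 ≡ (x - 1) + 1 [ZMOD 2 ^ n] := Int.ModEq.add_right 1 h
    _ = x := by ring

lemma pmap_modeq (n : ℕ) (e : Bool) (i : ℤ) :
    pmap n e i ≡ 2 * i - (if e then 1 else 0) [ZMOD (2 ^ n)] := by
  unfold pmap
  cases e <;> simp [vmod_modeq]

lemma pcomp_modeq (n : ℕ) (es : List Bool) (i : ℤ) :
    pcomp n es i ≡ 2 ^ es.length * i - bitsum es [ZMOD (2 ^ n)] := by
  induction es with
  | nil => simp [pcomp, bitsum, Int.ModEq.refl]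
  | cons e es ih =>
    have h1 : pcomp n (e :: es) i ≡ 2 * pcomp n es i - (if e then 1 else 0)
        [ZMOD (2 ^ n)] := pmap_modeq n e _
    have h2 : 2 * pcomp n es i - (if e then 1 else 0) ≡
        2 * (2 ^ es.length * i - bitsum es) - (if e then 1 else 0) [ZMOD (2 ^ n)] :=
      Int.ModEq.sub ((Int.ModEq.refl 2).mul ih) (Int.ModEq.refl _)
    refine h1.trans (h2.trans ?_)
    have : 2 * (2 ^ es.length * i - bitsum es) - (if e then 1 else 0)
        = 2 ^ (e :: es).length * i - bitsum (e :: es) := by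
      simp [bitsum, List.length_cons, pow_succ]; ring
    rw [this]

lemma bitsum_nonneg (es : List Bool) : 0 ≤ bitsum es := by
  induction es with
  | nil => simp [bitsum]
  | cons e es ih => cases e <;> simp [bitsum] <;> omega

lemma bitsum_le (es : List Bool) : bitsum es ≤ 2 ^ es.length - 1 := by
  induction es with
  | nil => simp [bitsum]
  | cons e es ih => cases e <;> simp [bitsum, pow_succ] <;> omega

lemma bitsum_eq_iff (es : List Bool) :
    bitsum es = 2 ^ es.length - 1 ↔ ∀ e ∈ es, e = true := by
  induction es with
  | nil => simp [bitsum]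
  | cons e es ih =>
    have h1 := bitsum_le es
    have h2 := bitsum_nonneg es
    cases e
    · simp only [bitsum, List.mem_cons, List.length_cons, pow_succ]
      simp only [if_neg (by simp : ¬(false = true))]
      constructor
      · intro h; omega
      · intro h; exact absurd (h false (Or.inl rfl)) (by simp)
    · simp only [bitsum, List.mem_cons, List.length_cons, pow_succ, if_pos rfl]
      rw [show (∀ e, e = true ∨ e ∈ es → e = true) ↔ ∀ e ∈ es, e = true from
        ⟨fun h e he => h e (Or.inr he), fun h e he => he.elim (fun x => x) (h e)⟩, ← ih]
      simp only [if_pos trivial]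
      omega

theorem stmt1 (n r : ℕ) (hn : 4 ≤ n) (hr1 : 1 ≤ r) (hr2 : r ≤ n - 3)
    (ε : Fin r → Bool) (i : ℤ) (hi1 : 1 ≤ i) (hi2 : i ≤ 2 ^ (n - 1)) :
    pcomp n (List.ofFn ε) i ≡ 1 [ZMOD (2 ^ n)] ↔
      (i ≡ 1 [ZMOD (2 ^ (n - r))] ∧ ∀ j : Fin r, ε j = true) := by
  have hrn : r ≤ n := by omega
  have hlen : (List.ofFn ε).length = r := List.length_ofFn
  set S := bitsum (List.ofFn ε) with hS
  have hSle : S ≤ 2 ^ r - 1 := by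
    have := bitsum_le (List.ofFn ε); rwa [hlen] at this
  have hSnn : 0 ≤ S := bitsum_nonneg _
  have hkey : pcomp n (List.ofFn ε) i ≡ 2 ^ r * i - S [ZMOD (2 ^ n)] := by
    have := pcomp_modeq n (List.ofFn ε) i
    rwa [hlen] at this
  have hall : S = 2 ^ r - 1 ↔ ∀ j : Fin r, ε j = true := by
    have := bitsum_eq_iff (List.ofFn ε)
    rw [hlen] at this
    rw [hS, this]
    simp
  have hpow : (2 : ℤ) ^ n = 2 ^ r * 2 ^ (n - r) := by
    rw [← pow_add]; congr 1; omega
  constructor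
  · intro h
    have h1 : (2 : ℤ) ^ n ∣ 1 - (2 ^ r * i - S) :=
      (Int.modEq_iff_dvd.mp (hkey.symm.trans h))
    have hdr : (2 : ℤ) ^ r ∣ 2 ^ n := pow_dvd_pow 2 hrn
    have h2 : (2 : ℤ) ^ r ∣ S + 1 := by
      have := dvd_trans hdr h1
      have h3 : (2 : ℤ) ^ r ∣ 2 ^ r * i := Dvd.intro i rfl
      have : (2 : ℤ) ^ r ∣ (1 - (2 ^ r * i - S)) + 2 ^ r * i := dvd_add this h3
      have heq : (1 - (2 ^ r * i - S)) + 2 ^ r * i = S + 1 := by ring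
      rwa [heq] at this
    have hSeq : S = 2 ^ r - 1 := by
      have := Int.le_of_dvd (by omega) h2
      omega
    have hεall := hall.mp hSeq
    refine ⟨?_, hεall⟩
    rw [Int.modEq_iff_dvd]
    have h4 : (2 : ℤ) ^ n ∣ 2 ^ r * (1 - i) := by
      have heq : (2 : ℤ) ^ r * (1 - i) = 1 - (2 ^ r * i - S) := by rw [hSeq]; ring
      rw [heq]; exact h1
    rw [hpow] at h4
    exact (mul_dvd_mul_iff_left (a := (2:ℤ)^r) (by positivity)).mp h4
  · rintro ⟨hmod, hεall⟩
    have hSeq : S = 2 ^ r - 1 := hall.mpr hεall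
    refine hkey.trans ?_
    rw [Int.modEq_iff_dvd]
    have h1 : (2 : ℤ) ^ (n - r) ∣ 1 - i := Int.modEq_iff_dvd.mp hmod
    have heq : 1 - (2 ^ r * i - S) = 2 ^ r * (1 - i) + (S - 2 ^ r + 1) := by ring
    rw [heq, hSeq, hpow]
    simpa using mul_dvd_mul_left ((2:ℤ)^r) h1
end

section
/- Let x ∈ ℂ^{N+1} satisfy θ_n(x) = x, σ_0(x) = x, and σ_1(x) = x. Then E_3(x_1) = E_3(x_2) = ⋯ = E_3(x_8), i.e., all eight residue-class sums of coordinates modulo 8 are equal. -/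
/-- The representative of `y` modulo `2^n` taken in `{1, …, 2^n}` (for `y ≥ 1`). -/
def vmodN (n y : ℕ) : ℕ := (y - 1) % 2 ^ n + 1

/-- `E_3(x_j) = ∑_{1 ≤ s ≤ 2^(n-3)} x_{j + 8s}`, indices mod `2^n` in `{1, …, 2^n}`. -/
noncomputable def E3 (n : ℕ) (x : ℕ → ℂ) (j : ℕ) : ℂ :=
  ∑ s ∈ Finset.Icc 1 (2 ^ (n - 3)), x (vmodN n (j + 8 * s))

lemma key (n : ℕ) (hn : 3 ≤ n) (x : ℕ → ℂ) (j : ℕ) (hj1 : 1 ≤ j) (hj8 : j ≤ 8) :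
    E3 n x j = ∑ s ∈ Finset.range (2 ^ (n - 3)), x (8 * s + j) := by
  have hM : 8 * 2 ^ (n - 3) = 2 ^ n := by
    have h : (2:ℕ) ^ 3 * 2 ^ (n - 3) = 2 ^ n := by rw [← pow_add]; congr 1; omega
    simpa using h
  obtain ⟨m, hm⟩ : ∃ m, 2 ^ (n - 3) = m + 1 :=
    ⟨2 ^ (n - 3) - 1, by have := Nat.one_le_two_pow (n := n - 3); omega⟩
  rw [E3, ← Finset.Ico_add_one_right_eq_Icc, Finset.sum_Ico_eq_sum_range]
  rw [hm] at hM ⊢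
  rw [Nat.add_sub_cancel]
  rw [Finset.sum_range_succ, Finset.sum_range_succ']
  congr 1
  · apply Finset.sum_congr rfl
    intro i hi
    simp only [Finset.mem_range] at hi
    congr 1
    have hlt : j + 8 * (1 + i) - 1 < 2 ^ n := by omega
    rw [vmodN, Nat.mod_eq_of_lt hlt]
    omega
  · congr 1
    rw [vmodN]
    have he : j + 8 * (1 + m) - 1 = 2 ^ n + (j - 1) := by omega
    rw [he, Nat.add_mod_left, Nat.mod_eq_of_lt (by omega)]
    omega

theorem stmt16 (n : ℕ) (hn : 3 ≤ n) (x : ℕ → ℂ)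
    (hθ : ∀ i, 1 ≤ i → i ≤ 2 ^ n → x i = x (2 ^ n - i + 1))
    (hσ0 : ∀ i, 1 ≤ i → 2 * i ≤ 2 ^ n → x (2 * i - 1) = x (2 * i))
    (hσ1 : ∀ j, 1 ≤ j → j ≤ 2 ^ n → (j % 4 = 1 ∨ j % 4 = 2) → x j = x (j + 2)) :
    ∀ i j, 1 ≤ i → i ≤ 8 → 1 ≤ j → j ≤ 8 → E3 n x i = E3 n x j := by
  have hM : 8 * 2 ^ (n - 3) = 2 ^ n := by
    have h : (2:ℕ) ^ 3 * 2 ^ (n - 3) = 2 ^ n := by rw [← pow_add]; congr 1; omega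
    simpa using h
  set M := 2 ^ (n - 3) with hMdef
  -- σ0 pairs: S j = S (j+1) for odd j
  have h0 : ∀ j, j % 2 = 1 → j ≤ 7 →
      (∑ s ∈ Finset.range M, x (8 * s + j)) = ∑ s ∈ Finset.range M, x (8 * s + (j + 1)) := by
    intro j hj hj7
    apply Finset.sum_congr rfl
    intro s hs
    simp only [Finset.mem_range] at hs
    have h := hσ0 ((8 * s + j + 1) / 2) (by omega) (by omega)
    rw [show 2 * ((8 * s + j + 1) / 2) - 1 = 8 * s + j by omega,
        show 2 * ((8 * s + j + 1) / 2) = 8 * s + (j + 1) by omega] at h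
    exact h
  -- σ1 pairs: S j = S (j+2) for j ≡ 1,2 mod 4
  have h1 : ∀ j, 1 ≤ j → (j % 4 = 1 ∨ j % 4 = 2) → j ≤ 6 →
      (∑ s ∈ Finset.range M, x (8 * s + j)) = ∑ s ∈ Finset.range M, x (8 * s + (j + 2)) := by
    intro j hj1 hj hj6
    apply Finset.sum_congr rfl
    intro s hs
    simp only [Finset.mem_range] at hs
    have h := hσ1 (8 * s + j) (by omega) (by omega) (by omega)
    rw [show 8 * s + j + 2 = 8 * s + (j + 2) by omega] at h
    exact h
  -- θ: S 2 = S 7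
  have h27 : (∑ s ∈ Finset.range M, x (8 * s + 2)) = ∑ s ∈ Finset.range M, x (8 * s + 7) := by
    rw [← Finset.sum_range_reflect]
    apply Finset.sum_congr rfl
    intro s hs
    simp only [Finset.mem_range] at hs
    have h := hθ (8 * (M - 1 - s) + 2) (by omega) (by omega)
    rw [show 2 ^ n - (8 * (M - 1 - s) + 2) + 1 = 8 * s + 7 by omega] at h
    exact h
  have e12 := h0 1 (by norm_num) (by norm_num)
  have e34 := h0 3 (by norm_num) (by norm_num)
  have e56 := h0 5 (by norm_num) (by norm_num)
  have e78 := h0 7 (by norm_num) (by norm_num)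
  have e13 := h1 1 (by norm_num) (by norm_num) (by norm_num)
  have e57 := h1 5 (by norm_num) (by norm_num) (by norm_num)
  norm_num at e12 e34 e56 e78 e13 e57
  have H : ∀ j, 1 ≤ j → j ≤ 8 →
      (∑ s ∈ Finset.range M, x (8 * s + j)) = ∑ s ∈ Finset.range M, x (8 * s + 1) := by
    intro j hj1 hj8
    interval_cases j
    · rfl
    · exact e12.symm
    · exact e13.symm
    · exact e34.symm.trans e13.symm
    · exact e57.trans (h27.symm.trans e12.symm)
    · exact e56.symm.trans (e57.trans (h27.symm.trans e12.symm))
    · exact h27.symm.trans e12.symm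
    · exact e78.symm.trans (h27.symm.trans e12.symm)
  intro i j hi1 hi8 hj1 hj8
  rw [key n hn x i hi1 hi8, key n hn x j hj1 hj8, H i hi1 hi8, H j hj1 hj8]
end

section
/- If x ∈ ℂ^{N+1} satisfies θ_n(x) = x (x_i = x_{2^n−i+1} for 1 ≤ i ≤ 2^n, x_0 fixed), then Y^n(x) − X^n(x) = x_0 · (E_2(x_1 − x_3))², where Y^n − X^n = x_0·E_2(x_1x_4 + x_2x_3 − x_1x_2 − x_3x_4) and E_2(x_j) = ∑_{k ≡ j (mod 4)} x_k. -/
/-- `E_2(x_j) = ∑_{1 ≤ s ≤ 2^(n-2)} x_{j + 4s}`, indices mod `2^n` in `{1, …, 2^n}`. -/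
noncomputable def E2 (n : ℕ) (x : ℕ → ℂ) (j : ℕ) : ℂ :=
  ∑ s ∈ Finset.Icc 1 (2 ^ (n - 2)), x (vmodN n (j + 4 * s))

lemma hN_aux (n : ℕ) (hn : 3 ≤ n) : 2 ^ n = 4 * 2 ^ (n - 2) := by
  calc 2 ^ n = 2 ^ (2 + (n - 2)) := by congr 1; omega
    _ = 4 * 2 ^ (n - 2) := by rw [pow_add]; norm_num

lemma E2_range (n : ℕ) (hn : 3 ≤ n) (x : ℕ → ℂ) (j : ℕ) (h1 : 1 ≤ j) (h4 : j ≤ 4) :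
    E2 n x j = ∑ t ∈ Finset.range (2 ^ (n - 2)), x (j + 4 * t) := by
  have hN : 2 ^ n = 4 * 2 ^ (n - 2) := hN_aux n hn
  have hM : 1 ≤ 2 ^ (n - 2) := Nat.one_le_two_pow
  rw [E2]
  apply Finset.sum_nbij' (fun s => s % 2 ^ (n - 2)) (fun t => if t = 0 then 2 ^ (n - 2) else t)
  · intro s hs
    simp only [Finset.mem_Icc] at hs
    simp only [Finset.mem_range]
    exact Nat.mod_lt _ (by omega)
  · intro t ht
    simp only [Finset.mem_range] at ht
    simp only [Finset.mem_Icc]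
    split <;> omega
  · intro s hs
    simp only [Finset.mem_Icc] at hs
    rcases eq_or_lt_of_le hs.2 with h | h
    · simp [h, Nat.mod_self]
    · rw [Nat.mod_eq_of_lt h]
      simp only [ite_eq_right_iff]
      omega
  · intro t ht
    simp only [Finset.mem_range] at ht
    split_ifs with h
    · simp [h, Nat.mod_self]
    · exact Nat.mod_eq_of_lt ht
  · intro s hs
    simp only [Finset.mem_Icc] at hs
    congr 1
    rcases eq_or_lt_of_le hs.2 with h | h
    · subst h
      rw [Nat.mod_self]
      unfold vmodN
      have : j + 4 * 2 ^ (n - 2) - 1 = (j - 1) + 2 ^ n := by omega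
      rw [this, Nat.add_mod_right, Nat.mod_eq_of_lt (by omega)]
      omega
    · rw [Nat.mod_eq_of_lt h]
      unfold vmodN
      have : (j + 4 * s - 1) % 2 ^ n = j + 4 * s - 1 := Nat.mod_eq_of_lt (by omega)
      omega

lemma E2_flip (n : ℕ) (hn : 3 ≤ n) (x : ℕ → ℂ)
    (hθ : ∀ i, 1 ≤ i → i ≤ 2 ^ n → x i = x (2 ^ n - i + 1))
    (j : ℕ) (h1 : 1 ≤ j) (h4 : j ≤ 4) :
    E2 n x (5 - j) = E2 n x j := by
  have hN : 2 ^ n = 4 * 2 ^ (n - 2) := hN_aux n hn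
  rw [E2_range n hn x (5 - j) (by omega) (by omega), E2_range n hn x j h1 h4]
  rw [← Finset.sum_range_reflect (fun t => x (j + 4 * t)) (2 ^ (n - 2))]
  apply Finset.sum_congr rfl
  intro t ht
  simp only [Finset.mem_range] at ht
  rw [hθ (5 - j + 4 * t) (by omega) (by omega)]
  congr 1
  omega

/-- If `θ_n(x) = x`, then `Y^n(x) - X^n(x) = x_0 · (E_2(x_1 - x_3))²`.
Here `Y^n - X^n = x_0 · E_2(x_1 x_4 + x_2 x_3 - x_1 x_2 - x_3 x_4)`,
with `E_2` a ring homomorphism, so the left side evaluates to the displayed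
combination of the residue-class sums `E_2(x_j)`. -/
theorem stmt18 (n : ℕ) (hn : 3 ≤ n) (x : ℕ → ℂ)
    (hθ : ∀ i, 1 ≤ i → i ≤ 2 ^ n → x i = x (2 ^ n - i + 1)) :
    x 0 * (E2 n x 1 * E2 n x 4 + E2 n x 2 * E2 n x 3
        - E2 n x 1 * E2 n x 2 - E2 n x 3 * E2 n x 4)
      = x 0 * (E2 n x 1 - E2 n x 3) ^ 2 := by
  have h4 : E2 n x 4 = E2 n x 1 := E2_flip n hn x hθ 1 le_rfl (by norm_num)
  have h2 : E2 n x 2 = E2 n x 3 := E2_flip n hn x hθ 3 (by norm_num) (by norm_num)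
  rw [h4, h2]; ring
end

section
/- Let G be a connected rank-m uniform hypergraph with principal eigenpair (λ_G, v), where v is the unique maximizer of the Lagrangian F_G on the positive part of the ℓ_m unit sphere. Then G is regular (all vertex degrees equal) if and only if v is a positive scalar multiple of the all-ones vector. -/
open Finset

/-- The Lagrangian `F_G(x) = ∑_{e ∈ E} ∏_{i ∈ e} x_i` of a hypergraph with edge set `E`. -/
def lagrangian {n : ℕ} (E : Finset (Finset (Fin n))) (x : Fin n → ℝ) : ℝ :=
  ∑ e ∈ E, ∏ i ∈ e, x i

/-- A hypergraph (given by its edge set) is connected: any two vertices are joined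
by a chain of overlapping edges. -/
def HConnected {n : ℕ} (E : Finset (Finset (Fin n))) : Prop :=
  ∀ i j : Fin n, Relation.ReflTransGen (fun a b => ∃ e ∈ E, a ∈ e ∧ b ∈ e) i j

/-- The degree of vertex `i`: the number of edges containing `i`. -/
def hdeg {n : ℕ} (E : Finset (Finset (Fin n))) (i : Fin n) : ℕ :=
  (E.filter fun e => i ∈ e).card

lemma swap_sum {n : ℕ} (E : Finset (Finset (Fin n))) (f : Fin n → ℝ) :
    ∑ e ∈ E, ∑ k ∈ e, f k = ∑ k : Fin n, (hdeg E k : ℝ) * f k := by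
  have h1 : ∀ e ∈ E, ∑ k ∈ e, f k = ∑ k : Fin n, if k ∈ e then f k else 0 := by
    intro e _
    rw [Finset.sum_ite_mem, Finset.univ_inter]
  rw [Finset.sum_congr rfl h1, Finset.sum_comm]
  refine Finset.sum_congr rfl fun k _ => ?_
  rw [← Finset.sum_filter, hdeg]
  rcases eq_or_ne (f k) 0 with h | h
  · simp [h]
  · rw [Finset.sum_const, nsmul_eq_mul]

lemma exists_better {n m : ℕ} (hm : 2 ≤ m) (E : Finset (Finset (Fin n)))
    (hrank : ∀ e ∈ E, e.card = m) (c : ℝ) (hc : 0 < c)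
    (hsum : ∑ _k : Fin n, c ^ m = 1)
    {i j : Fin n} (hij : hdeg E j < hdeg E i) :
    ∃ x : Fin n → ℝ, (∀ k, 0 ≤ x k) ∧ (∑ k, x k ^ m = 1) ∧
      lagrangian E (fun _ => c) < lagrangian E x := by
  have hne : i ≠ j := by rintro rfl; exact lt_irrefl _ hij
  have hm0 : m ≠ 0 := by omega
  set s : ℝ := c ^ m with hs_def
  have hs : 0 < s := pow_pos hc m
  set p : ℝ := ((m : ℝ))⁻¹ with hp_def
  have hp : 0 < p := by positivity
  set X : ℝ → Fin n → ℝ := fun t k =>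
    if k = i then (s + t) ^ p else if k = j then (s - t) ^ p else c with hX_def
  have hX0 : X 0 = fun _ => c := by
    funext k
    have : s ^ p = c := Real.pow_rpow_inv_natCast hc.le hm0
    simp only [hX_def, add_zero, sub_zero]
    split_ifs <;> simp [this]
  -- nonneg and unit for t ∈ [0, s)
  have hXnonneg : ∀ t, 0 ≤ t → t ≤ s → ∀ k, 0 ≤ X t k := by
    intro t ht hts k
    simp only [hX_def]
    split_ifs
    · exact Real.rpow_nonneg (by linarith) _
    · exact Real.rpow_nonneg (by linarith) _
    · exact hc.le
  have hXunit : ∀ t, 0 ≤ t → t ≤ s → ∑ k, X t k ^ m = 1 := by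
    intro t ht hts
    have key : ∀ u : ℝ, 0 ≤ u → (u ^ p) ^ m = u := fun u hu =>
      Real.rpow_inv_natCast_pow hu hm0
    have h1 : ∀ k : Fin n, X t k ^ m =
        c ^ m + ((if k = i then t else 0) + (if k = j then -t else 0)) := by
      intro k
      simp only [hX_def]
      split_ifs with h1 h2
      · exact absurd (h1 ▸ h2.symm) hne.symm
      · rw [key _ (by linarith)]; ring
      · rw [key _ (by linarith)]; ring
      · ring
    rw [Finset.sum_congr rfl fun k _ => h1 k]
    rw [Finset.sum_add_distrib, Finset.sum_add_distrib]
    simp [hsum]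
    rw [Finset.sum_const, Finset.card_univ, Fintype.card_fin, nsmul_eq_mul] at hsum
    exact hsum
  -- derivative
  set D : ℝ := p * s ^ (p - 1) with hD_def
  have hD : 0 < D := mul_pos hp (Real.rpow_pos_of_pos hs _)
  set d : Fin n → ℝ := fun k => if k = i then D else if k = j then -D else 0 with hd_def
  have hderiv : ∀ k : Fin n, HasDerivAt (fun t => X t k) (d k) 0 := by
    intro k
    simp only [hX_def, hd_def]
    split_ifs with h1 h2
    · have hin : HasDerivAt (fun t : ℝ => s + t) 1 0 := by
        simpa using (hasDerivAt_id (0:ℝ)).const_add s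
      have hout : HasDerivAt (fun x : ℝ => x ^ p) (p * s ^ (p - 1)) (s + 0) := by
        rw [add_zero]; exact Real.hasDerivAt_rpow_const (Or.inl hs.ne')
      simpa [hD_def, Function.comp_def] using hout.comp 0 hin
    · have hin : HasDerivAt (fun t : ℝ => s - t) (-1) 0 := by
        simpa using (hasDerivAt_id (0:ℝ)).const_sub s
      have hout : HasDerivAt (fun x : ℝ => x ^ p) (p * s ^ (p - 1)) (s - 0) := by
        rw [sub_zero]; exact Real.hasDerivAt_rpow_const (Or.inl hs.ne')
      simpa [hD_def, Function.comp_def] using hout.comp 0 hin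
    · exact hasDerivAt_const 0 c
  have hφ : HasDerivAt (fun t => lagrangian E (X t))
      (∑ e ∈ E, ∑ k ∈ e, (∏ l ∈ e.erase k, X 0 l) • d k) 0 := by
    apply HasDerivAt.fun_sum
    intro e he
    exact HasDerivAt.fun_finsetProd fun k _ => hderiv k
  set L : ℝ := ∑ e ∈ E, ∑ k ∈ e, (∏ l ∈ e.erase k, X 0 l) • d k with hL_def
  have hLval : L = c ^ (m - 1) * D * ((hdeg E i : ℝ) - (hdeg E j : ℝ)) := by
    have he1 : ∀ e ∈ E, ∑ k ∈ e, (∏ l ∈ e.erase k, X 0 l) • d k =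
        c ^ (m - 1) * ((if i ∈ e then D else 0) - (if j ∈ e then D else 0)) := by
      intro e he
      have hcard : ∀ k ∈ e, ∏ l ∈ e.erase k, X 0 l = c ^ (m - 1) := by
        intro k hk
        rw [hX0]
        rw [Finset.prod_const, Finset.card_erase_of_mem hk, hrank e he]
      rw [Finset.sum_congr rfl fun k hk => by rw [hcard k hk]]
      have hd2 : ∀ k : Fin n, d k = (if k = i then D else 0) + (if k = j then -D else 0) := by
        intro k
        simp only [hd_def]
        split_ifs with h1 h2
        · exact absurd (h1 ▸ h2.symm) hne.symm
        · ring
        · ring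
        · ring
      simp only [smul_eq_mul]
      rw [← Finset.mul_sum]
      congr 1
      rw [Finset.sum_congr rfl fun k _ => hd2 k, Finset.sum_add_distrib]
      rw [Finset.sum_ite_eq' e i fun _ => D, Finset.sum_ite_eq' e j fun _ => -D]
      split_ifs <;> ring
    rw [hL_def, Finset.sum_congr rfl he1, ← Finset.mul_sum]
    have hcount : ∀ a : Fin n, ∑ e ∈ E, (if a ∈ e then D else 0) = (hdeg E a : ℝ) * D := by
      intro a
      rw [← Finset.sum_filter]
      rw [Finset.sum_const, hdeg]
      simp [mul_comm]
    rw [Finset.sum_sub_distrib, hcount i, hcount j]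
    ring
  have hL : 0 < L := by
    rw [hLval]
    have : (0:ℝ) < (hdeg E i : ℝ) - (hdeg E j : ℝ) := by
      exact sub_pos.mpr (by exact_mod_cast hij)
    positivity
  -- slope argument
  have hslope : Filter.Tendsto (slope (fun t => lagrangian E (X t)) 0) (nhdsWithin 0 {(0:ℝ)}ᶜ)
      (nhds L) := hasDerivAt_iff_tendsto_slope.mp hφ
  have h1 : ∀ᶠ t in nhdsWithin (0:ℝ) (Set.Ioi 0), 0 < slope (fun t => lagrangian E (X t)) 0 t := by
    exact (hslope.mono_left (nhdsWithin_mono 0 fun x hx => ne_of_gt hx)).eventually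
      (lt_mem_nhds hL)
  have h2 : ∀ᶠ t in nhdsWithin (0:ℝ) (Set.Ioi 0), t ∈ Set.Ioo (0:ℝ) s :=
    Filter.eventually_of_mem (Ioo_mem_nhdsGT_of_mem ⟨le_rfl, hs⟩) fun t ht => ht
  obtain ⟨t, hts, htm⟩ := (h1.and h2).exists
  refine ⟨X t, hXnonneg t htm.1.le htm.2.le, hXunit t htm.1.le htm.2.le, ?_⟩
  have : 0 < (lagrangian E (X t) - lagrangian E (X 0)) / (t - 0) := by
    rwa [slope_def_field] at hts
  rw [sub_zero] at this
  have := mul_pos this (htm.1)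
  rw [div_mul_cancel₀] at this
  · rw [← hX0]; linarith
  · exact htm.1.ne'

theorem stmt19 (n m : ℕ) (hn : 1 ≤ n) (hm : 2 ≤ m) (E : Finset (Finset (Fin n)))
    (hrank : ∀ e ∈ E, e.card = m) (hconn : HConnected E)
    (lam : ℝ) (v : Fin n → ℝ)
    (hv_pos : ∀ i, 0 < v i)
    (hv_unit : ∑ i, v i ^ m = 1)
    (hlam : lam = lagrangian E v)
    (hmax : ∀ x : Fin n → ℝ, (∀ i, 0 ≤ x i) → ∑ i, x i ^ m = 1 →
      lagrangian E x ≤ lagrangian E v)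
    (huniq : ∀ x : Fin n → ℝ, (∀ i, 0 < x i) → ∑ i, x i ^ m = 1 →
      lagrangian E x = lagrangian E v → x = v) :
    (∀ i j : Fin n, hdeg E i = hdeg E j) ↔
      ∃ c : ℝ, 0 < c ∧ v = fun _ => c := by
  have hm0 : m ≠ 0 := by omega
  have hn0 : (0:ℝ) < n := by exact_mod_cast hn
  have hmR : (0:ℝ) < m := by positivity
  constructor
  · intro hreg
    set c : ℝ := ((1:ℝ)/n) ^ ((m:ℝ))⁻¹ with hc_def
    have hc : 0 < c := Real.rpow_pos_of_pos (by positivity) _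
    have hcm : c ^ m = 1 / n := Real.rpow_inv_natCast_pow (by positivity) hm0
    have hwunit : ∑ _k : Fin n, c ^ m = 1 := by
      rw [Finset.sum_const, Finset.card_univ, Fintype.card_fin, hcm, nsmul_eq_mul]
      field_simp
    set i0 : Fin n := ⟨0, hn⟩
    set dd : ℕ := hdeg E i0 with hdd_def
    have hdd : ∀ k, hdeg E k = dd := fun k => hreg k i0
    have handshake : (n : ℝ) * dd = E.card * m := by
      have h1 := swap_sum E (fun _ => (1:ℝ))
      simp only [mul_one] at h1
      have h2 : ∀ e ∈ E, ∑ _k ∈ e, (1:ℝ) = (m:ℝ) := by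
        intro e he
        rw [Finset.sum_const, hrank e he, nsmul_eq_mul, mul_one]
      rw [Finset.sum_congr rfl h2, Finset.sum_const, nsmul_eq_mul] at h1
      rw [h1, Finset.sum_congr rfl fun k _ => by rw [hdd k]]
      rw [Finset.sum_const, Finset.card_univ, Fintype.card_fin, nsmul_eq_mul]
    have hFw : lagrangian E (fun _ => c) = E.card / n := by
      unfold lagrangian
      have h2 : ∀ e ∈ E, ∏ _k ∈ e, c = (1:ℝ)/n := by
        intro e he
        rw [Finset.prod_const, hrank e he, hcm]
      rw [Finset.sum_congr rfl h2, Finset.sum_const, nsmul_eq_mul]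
      ring
    have hFv : lagrangian E v ≤ E.card / n := by
      have step1 : ∀ e ∈ E, ∏ k ∈ e, v k ≤ ∑ k ∈ e, ((m:ℝ))⁻¹ * v k ^ m := by
        intro e he
        have hAM := Real.geom_mean_le_arith_mean_weighted e (fun _ => ((m:ℝ))⁻¹)
          (fun k => v k ^ m) (fun _ _ => inv_nonneg.mpr hmR.le)
          (by rw [Finset.sum_const, hrank e he, nsmul_eq_mul]; field_simp)
          (fun k _ => pow_nonneg (hv_pos k).le m)
        calc ∏ k ∈ e, v k = ∏ k ∈ e, (v k ^ m) ^ ((m:ℝ))⁻¹ := by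
              refine Finset.prod_congr rfl fun k _ => ?_
              rw [Real.pow_rpow_inv_natCast (hv_pos k).le hm0]
          _ ≤ _ := hAM
      calc lagrangian E v ≤ ∑ e ∈ E, ∑ k ∈ e, ((m:ℝ))⁻¹ * v k ^ m :=
            Finset.sum_le_sum step1
        _ = ∑ k : Fin n, (hdeg E k : ℝ) * (((m:ℝ))⁻¹ * v k ^ m) := swap_sum E _
        _ = (dd : ℝ) * ((m:ℝ))⁻¹ * ∑ k, v k ^ m := by
            rw [Finset.mul_sum]
            refine Finset.sum_congr rfl fun k _ => ?_
            rw [hdd k]; ring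
        _ = (dd : ℝ) / m := by rw [hv_unit]; ring
        _ = E.card / n := by
            rw [div_eq_div_iff hmR.ne' hn0.ne']
            linarith [handshake]
    have hle := hmax (fun _ => c) (fun _ => hc.le) (by simpa using hwunit)
    have heq : lagrangian E (fun _ => c) = lagrangian E v := by
      refine le_antisymm hle ?_
      rw [hFw]; exact hFv
    have hvc := huniq (fun _ => c) (fun _ => hc) (by simpa using hwunit) heq
    exact ⟨c, hc, hvc.symm⟩
  · rintro ⟨c, hc, rfl⟩ i j
    by_contra hne
    rcases Nat.lt_or_ge (hdeg E i) (hdeg E j) with h | h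
    · obtain ⟨x, h1, h2, h3⟩ := exists_better hm E hrank c hc (by simpa using hv_unit) h
      exact absurd (hmax x h1 h2) (not_le.mpr h3)
    · have h' : hdeg E j < hdeg E i := lt_of_le_of_ne h fun e => hne e.symm
      obtain ⟨x, h1, h2, h3⟩ := exists_better hm E hrank c hc (by simpa using hv_unit) h'
      exact absurd (hmax x h1 h2) (not_le.mpr h3)
end
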